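/- In the t-BMW algebra K_{n+1}, one has g_n e_n g_{n-1} f_n = f_{n-1} g_n g_{n-1} e_{n-1}. -/
import Mathlib


/-- In the t-BMW algebra `K_{n+1}`, one has
`g_n e_n g_{n-1} f_n = f_{n-1} g_n g_{n-1} e_{n-1}`. -/
theorem tBMW_L4_vi {K A : Type*} [Field K] [Ring A] [Algebra K A]
    (a : K) (ha : a ≠ 0)
    (gm gn hm hn em en fm fn : A)
    -- g_n f_n = f_n g_n = a⁻¹ f_n
    (hgf : gn * fn = a⁻¹ • fn) (hfg : fn * gn = a⁻¹ • fn)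
    -- e_n g_{n-1} g_n = g_{n-1} g_n e_{n-1}
    (hegg : en * gm * gn = gm * gn * em)
    -- braid relation
    (hbraid : gn * gm * gn = gm * gn * gm)
    -- f_n e_{n-1} = e_{n-1} f_n = e_{n-1} h_n e_{n-1}
    (hfe : fn * em = em * hn * em) (hef : em * fn = em * hn * em)
    (hfec : fn * em = em * fn)
    -- g_n g_{n-1} f_n = f_{n-1} g_n g_{n-1}   (Lemma 2(ii))
    (hggf : gn * gm * fn = fm * gn * gm)
    -- g_{n-1} f_{n-1} = a⁻¹ f_{n-1}
    (hgfm : gm * fm = a⁻¹ • fm) :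
    gn * en * gm * fn = fm * gn * gm * em := by
  have h1 : fn = a • (gn * fn) := by
    rw [hgf, smul_smul, mul_inv_cancel₀ ha, one_smul]
  have h2 : gn * en * gm * (gn * fn) = a⁻¹ • (fm * gn * gm * em) := by
    calc gn * en * gm * (gn * fn) = gn * (en * gm * gn) * fn := by noncomm_ring
      _ = gn * (gm * gn * em) * fn := by rw [hegg]
      _ = gn * gm * gn * (em * fn) := by noncomm_ring
      _ = gm * gn * gm * (fn * em) := by rw [hbraid, hfec]
      _ = gm * (gn * gm * fn) * em := by noncomm_ring
      _ = gm * (fm * gn * gm) * em := by rw [hggf]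
      _ = (gm * fm) * (gn * gm * em) := by noncomm_ring
      _ = a⁻¹ • (fm * gn * gm * em) := by rw [hgfm, smul_mul_assoc]; noncomm_ring
  calc gn * en * gm * fn = gn * en * gm * (a • (gn * fn)) := by rw [← h1]
    _ = a • (gn * en * gm * (gn * fn)) := (mul_smul_comm _ _ _)
    _ = fm * gn * gm * em := by rw [h2, smul_smul, mul_inv_cancel₀ ha, one_smul]
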